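/- In Mechanism 2, the truthful strategy profile in which every agent i reports R_k(i) = R̃_k for all agents k is a Nash equilibrium (no agent can strictly increase her true utility by unilaterally changing her report), and its outcome is a maxmin-optimal allocation. -/
import Mathlib


open scoped Classical
open Real

namespace BandwidthAlloc

/-- A bid: `none` denotes the special bid β; `some r` denotes the real bid `r ≥ 0`. -/
abbrev Bid := Option NNReal

/-- Numeric value of a bid (β is treated as 0 in arithmetic). -/
noncomputable def bval (b : Bid) : ℝ := ((b.getD 0 : NNReal) : ℝ)

/-- A bid is positive when it is neither 0 nor β. -/
def posBid (b : Bid) : Prop := 0 < bval b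

/-- Utility of the bundle `xi` for an agent with desired set `Ri`: `min_{j ∈ Ri} xi j`. -/
noncomputable def bundleUtil {m : ℕ} (Ri : Finset (Fin m)) (xi : Fin m → ℝ) : ℝ :=
  sInf (xi '' (Ri : Set (Fin m)))

/-- Bandwidth-allocation utility of agent `i` under allocation `x`. -/
noncomputable def util {n m : ℕ} (R : Fin n → Finset (Fin m))
    (x : Fin n → Fin m → ℝ) (i : Fin n) : ℝ :=
  bundleUtil (R i) (x i)

/-- Weights: `w R i j = 1` iff `j ∈ R i`, else `0`. -/
noncomputable def w {n m : ℕ} (R : Fin n → Finset (Fin m)) (i : Fin n) (j : Fin m) : ℝ :=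
  if j ∈ R i then 1 else 0

/-- A valid (nonnegative, supply-respecting) allocation. -/
def validAlloc {n m : ℕ} (s : Fin m → ℝ) (x : Fin n → Fin m → ℝ) : Prop :=
  (∀ i j, 0 ≤ x i j) ∧ ∀ j, ∑ i, x i j ≤ s j

/-- CES welfare of the utility vector `v` (`ρ = 0` is Nash welfare; for `ρ < 0` a zero
utility yields welfare `0`, the limiting convention). -/
noncomputable def ces (ρ : ℝ) {n : ℕ} (v : Fin n → ℝ) : ℝ :=
  if ρ = 0 then ∏ i, v i
  else if ρ < 0 ∧ ∃ i, v i = 0 then 0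
  else (∑ i, v i ^ ρ) ^ (1 / ρ)

/-- `Ψ_ρ`: `x` is a valid allocation maximizing CES welfare among valid allocations. -/
def maxCES (ρ : ℝ) {n m : ℕ} (s : Fin m → ℝ) (R : Fin n → Finset (Fin m))
    (x : Fin n → Fin m → ℝ) : Prop :=
  validAlloc s x ∧ ∀ y, validAlloc s y → ces ρ (util R y) ≤ ces ρ (util R x)

/-- Constraint curve: continuous, normalized, strictly increasing, nonnegative on `[0,∞)`. -/
def IsConstraintCurve (f : ℝ → ℝ) : Prop :=
  ContinuousOn f (Set.Ici 0) ∧ f 0 = 0 ∧ StrictMonoOn f (Set.Ici 0) ∧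
    ∀ y ∈ Set.Ici (0 : ℝ), 0 ≤ f y

/-- `g` is identically zero on `[0,∞)`. -/
def zeroOn (g : ℝ → ℝ) : Prop := ∀ y ∈ Set.Ici (0 : ℝ), g y = 0

/-- Price curve: continuous, normalized, nonnegative, and either strictly increasing or
identically zero on `[0,∞)`. -/
def IsPriceCurve (g : ℝ → ℝ) : Prop :=
  ContinuousOn g (Set.Ici 0) ∧ g 0 = 0 ∧ (∀ y ∈ Set.Ici (0 : ℝ), 0 ≤ g y) ∧
    (StrictMonoOn g (Set.Ici 0) ∨ zeroOn g)

/-- Cost of the bundle `xi` under price curves `g`. -/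
noncomputable def cost {m : ℕ} (g : Fin m → ℝ → ℝ) (xi : Fin m → ℝ) : ℝ :=
  ∑ j, g j (xi j)

/-- `xi` is in the demand set of an agent with desired set `Ri` under price curves `g`. -/
def inDemand {m : ℕ} (g : Fin m → ℝ → ℝ) (Ri : Finset (Fin m)) (xi : Fin m → ℝ) : Prop :=
  (∀ j, 0 ≤ xi j) ∧ cost g xi ≤ 1 ∧
    ∀ yi : Fin m → ℝ, (∀ j, 0 ≤ yi j) → cost g yi ≤ 1 → bundleUtil Ri yi ≤ bundleUtil Ri xi

/-- Price curve equilibrium. -/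
def isPCE {n m : ℕ} (s : Fin m → ℝ) (R : Fin n → Finset (Fin m))
    (x : Fin n → Fin m → ℝ) (g : Fin m → ℝ → ℝ) : Prop :=
  (∀ i, inDemand g (R i) (x i)) ∧ (∀ j, ∑ i, x i j ≤ s j) ∧
    ∀ j, ¬ zeroOn (g j) → ∑ i, x i j = s j

/-- Step 1 of the ATP allocation rule: proportional sharing. -/
noncomputable def atp1 {n m : ℕ} (s : Fin m → ℝ) (b : Fin n → Fin m → Bid)
    (i : Fin n) (j : Fin m) : ℝ :=
  bval (b i j) / (∑ k, bval (b k j)) * s j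

/-- Steps 1–2 of the ATP allocation rule: goods with a positive bid are shared
proportionally; on a good where everyone bids `0` or `β`, an agent bidding `β` receives
as much as she receives of some fixed good on which she bids positively. -/
noncomputable def atp2 {n m : ℕ} (s : Fin m → ℝ) (b : Fin n → Fin m → Bid)
    (i : Fin n) (j : Fin m) : ℝ :=
  if ∃ k, posBid (b k j) then atp1 s b i j
  else if b i j = none then
    (if h : ∃ ℓ, posBid (b i ℓ) then atp1 s b i (Classical.choose h) else 0)
  else 0

/-- The full ATP allocation rule (steps 1–3): agents bidding `β` on an oversubscribed
step-2 good are penalized with the zero bundle. -/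
noncomputable def atp {n m : ℕ} (s : Fin m → ℝ) (b : Fin n → Fin m → Bid)
    (i : Fin n) (j : Fin m) : ℝ :=
  if ∃ ℓ, (¬ ∃ k, posBid (b k ℓ)) ∧ b i ℓ = none ∧ s ℓ < ∑ k, atp2 s b k ℓ then 0
  else atp2 s b i j

/-- Total bid-constraint cost `C_f(b_i)` of agent `i`'s bid vector. -/
noncomputable def bidCost {m : ℕ} (f : Fin m → ℝ → ℝ) (bi : Fin m → Bid) : ℝ :=
  ∑ j, f j (bval (bi j))

/-- A bid vector is feasible if it obeys the bid constraint `C_f(b_i) ≤ 1`. -/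
def feasibleBid {m : ℕ} (f : Fin m → ℝ → ℝ) (bi : Fin m → Bid) : Prop :=
  bidCost f bi ≤ 1

/-- `b` is a Nash equilibrium of `ATP(f)`: all bids are feasible and no agent can
strictly increase her utility by a unilateral feasible deviation. -/
def isNE {n m : ℕ} (s : Fin m → ℝ) (f : Fin m → ℝ → ℝ)
    (R : Fin n → Finset (Fin m)) (b : Fin n → Fin m → Bid) : Prop :=
  (∀ i, feasibleBid f (b i)) ∧
    ∀ (i : Fin n) (bi' : Fin m → Bid), feasibleBid f bi' →
      util R (atp s (Function.update b i bi')) i ≤ util R (atp s b) i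

/-- `NE_X(ATP(f))`: allocations arising from Nash equilibrium bid profiles. -/
def NEX {n m : ℕ} (s : Fin m → ℝ) (f : Fin m → ℝ → ℝ)
    (R : Fin n → Finset (Fin m)) : Set (Fin n → Fin m → ℝ) :=
  {x | ∃ b, isNE s f R b ∧ x = atp s b}

/-- `f` is homogeneous of degree `α` on the nonnegative reals. -/
def Homog (f : ℝ → ℝ) (α : ℝ) : Prop :=
  ∀ c ≥ (0 : ℝ), ∀ y ≥ (0 : ℝ), f (c * y) = c ^ α * f y

/-- `γ* = max {γ ≥ 0 : γ · Σ_i w_{ij} ≤ s_j for all j}` of Mechanism 1. -/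
noncomputable def gammaStar {n m : ℕ} (s : Fin m → ℝ) (R : Fin n → Finset (Fin m)) : ℝ :=
  sSup {γ : ℝ | 0 ≤ γ ∧ ∀ j, γ * ∑ i, w R i j ≤ s j}

/-- Mechanism 1: `x i j = γ* · w i j`. -/
noncomputable def mech1 {n m : ℕ} (s : Fin m → ℝ) (R : Fin n → Finset (Fin m)) :
    Fin n → Fin m → ℝ :=
  fun i j => gammaStar s R * w R i j

/-- `min_i u_i(x_i)`. -/
noncomputable def minUtil {n m : ℕ} (R : Fin n → Finset (Fin m))
    (x : Fin n → Fin m → ℝ) : ℝ :=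
  sInf (Set.range fun i => util R x i)

/-- `x` is maxmin-optimal: valid and attaining the maximum of `min_i u_i` over valid
allocations. -/
def maxminOptimal {n m : ℕ} (s : Fin m → ℝ) (R : Fin n → Finset (Fin m))
    (x : Fin n → Fin m → ℝ) : Prop :=
  validAlloc s x ∧ ∀ y, validAlloc s y → minUtil R y ≤ minUtil R x

/-- Mechanism 2: `P i k` is the set agent `i` claims agent `k` desires.
`eta P i = |{k : R_k(k) ≠ R_k(i)}|`. -/
noncomputable def eta {n m : ℕ} (P : Fin n → Fin n → Finset (Fin m)) (i : Fin n) : ℕ :=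
  (Finset.univ.filter fun k => P k k ≠ P i k).card

/-- Agent `i` is in `N̄`: for some `k`, `R_k(k) ⊊ R_k(i)`. -/
def inNbar {n m : ℕ} (P : Fin n → Fin n → Finset (Fin m)) (i : Fin n) : Prop :=
  ∃ k, P k k ⊂ P i k

/-- The penalty factor `α_i` of Mechanism 2. -/
noncomputable def alpha {n m : ℕ} (P : Fin n → Fin n → Finset (Fin m)) (i : Fin n) : ℝ :=
  if inNbar P i then 0 else 1 - (eta P i : ℝ) / n

/-- Effective reported sets of Mechanism 2: agents in `N̄` are replaced by `∅`. -/
noncomputable def effSets {n m : ℕ} (P : Fin n → Fin n → Finset (Fin m)) :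
    Fin n → Finset (Fin m) :=
  fun i => if inNbar P i then ∅ else P i i

/-- Mechanism 2: the allocation `x_i = α_i · y_i` where `y` is the Mechanism 1 outcome
on the effective sets. -/
noncomputable def mech2 {n m : ℕ} (s : Fin m → ℝ) (P : Fin n → Fin n → Finset (Fin m)) :
    Fin n → Fin m → ℝ :=
  fun i j => alpha P i * mech1 s (effSets P) i j

section Helpers

variable {n m : ℕ}

lemma w_nonneg (R : Fin n → Finset (Fin m)) (i : Fin n) (j : Fin m) : 0 ≤ w R i j := by
  unfold w; split <;> norm_num

lemma w_mono {R R' : Fin n → Finset (Fin m)} (h : ∀ i, R i ⊆ R' i) (i : Fin n) (j : Fin m) :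
    w R i j ≤ w R' i j := by
  unfold w
  by_cases hj : j ∈ R i
  · simp [hj, h i hj]
  · simp only [hj, if_neg, if_false]
    split <;> norm_num

lemma bundleUtil_le {Ri : Finset (Fin m)} (xi : Fin m → ℝ) {j : Fin m} (hj : j ∈ Ri) :
    bundleUtil Ri xi ≤ xi j :=
  csInf_le (Ri.finite_toSet.image _).bddBelow ⟨j, hj, rfl⟩

lemma bundleUtil_const {Ri : Finset (Fin m)} (h : Ri.Nonempty) {xi : Fin m → ℝ} {a : ℝ}
    (hc : ∀ j ∈ Ri, xi j = a) : bundleUtil Ri xi = a := by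
  have himg : xi '' (Ri : Set (Fin m)) = {a} := by
    ext y
    constructor
    · rintro ⟨j, hj, rfl⟩; exact hc j hj
    · rintro rfl; obtain ⟨j, hj⟩ := h; exact ⟨j, hj, hc j hj⟩
  rw [bundleUtil, himg, csInf_singleton]

lemma gammaStar_nonneg (s : Fin m → ℝ) (R : Fin n → Finset (Fin m)) :
    0 ≤ gammaStar s R :=
  Real.sSup_nonneg fun _ hγ => hγ.1

lemma zero_mem_gset {s : Fin m → ℝ} (hs : ∀ j, 0 < s j) (R : Fin n → Finset (Fin m)) :
    (0 : ℝ) ∈ {γ : ℝ | 0 ≤ γ ∧ ∀ j, γ * ∑ i, w R i j ≤ s j} :=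
  ⟨le_refl 0, fun j => by simpa using (hs j).le⟩

lemma gammaStar_mul_le {s : Fin m → ℝ} (hs : ∀ j, 0 < s j) (R : Fin n → Finset (Fin m))
    (j : Fin m) : gammaStar s R * ∑ i, w R i j ≤ s j := by
  set c : ℝ := ∑ i, w R i j with hc
  have hc0 : 0 ≤ c := Finset.sum_nonneg fun i _ => w_nonneg R i j
  rcases eq_or_lt_of_le hc0 with h | h
  · rw [← h, mul_zero]; exact (hs j).le
  · have h1 : gammaStar s R ≤ s j / c := by
      apply Real.sSup_le
      · intro γ hγ
        exact (le_div_iff₀ h).mpr (hγ.2 j)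
      · exact div_nonneg (hs j).le hc0
    calc gammaStar s R * c ≤ (s j / c) * c := mul_le_mul_of_nonneg_right h1 hc0
      _ = s j := div_mul_cancel₀ _ h.ne'

lemma gset_bddAbove {s : Fin m → ℝ} {R : Fin n → Finset (Fin m)} {j0 : Fin m}
    (h : 0 < ∑ i, w R i j0) :
    BddAbove {γ : ℝ | 0 ≤ γ ∧ ∀ j, γ * ∑ i, w R i j ≤ s j} :=
  ⟨s j0 / ∑ i, w R i j0, fun _ hγ => (le_div_iff₀ h).mpr (hγ.2 j0)⟩

lemma le_gammaStar {s : Fin m → ℝ} {R : Fin n → Finset (Fin m)} {j0 : Fin m}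
    (h : 0 < ∑ i, w R i j0) {γ : ℝ} (hγ0 : 0 ≤ γ)
    (hγ : ∀ j, γ * ∑ i, w R i j ≤ s j) : γ ≤ gammaStar s R :=
  le_csSup (gset_bddAbove h) ⟨hγ0, hγ⟩

lemma one_lt_csum {R : Fin n → Finset (Fin m)} {i : Fin n} {j0 : Fin m} (hj0 : j0 ∈ R i) :
    0 < ∑ k, w R k j0 := by
  have h1 : w R i j0 = 1 := by simp [w, hj0]
  have : (1 : ℝ) ≤ ∑ k, w R k j0 := by
    rw [← h1]
    exact Finset.single_le_sum (fun k _ => w_nonneg R k j0) (Finset.mem_univ i)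
  linarith

end Helpers

/-- in Mechanism 2, the truthful profile (every agent `i` reports
`R_k(i) = R̃_k` for all `k`) is a Nash equilibrium, and its outcome is a maxmin-optimal
allocation. -/
theorem mech2_truthful_NE {n m : ℕ} (s : Fin m → ℝ) (hs : ∀ j, 0 < s j)
    (Rt : Fin n → Finset (Fin m)) (hRt : ∀ i, (Rt i).Nonempty) :
    let Pt : Fin n → Fin n → Finset (Fin m) := fun _ k => Rt k
    (∀ (i : Fin n) (Pi' : Fin n → Finset (Fin m)),
        util Rt (mech2 s (Function.update Pt i Pi')) i ≤ util Rt (mech2 s Pt) i) ∧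
      maxminOptimal s Rt (mech2 s Pt) := by
  intro Pt
  have hPt : Pt = fun _ k => Rt k := rfl
  -- Facts at the truthful profile
  have hNbar : ∀ i, ¬ inNbar Pt i := by
    rintro i ⟨k, hk⟩
    rw [hPt] at hk
    exact ssubset_irrefl _ hk
  have halpha : ∀ i, alpha Pt i = 1 := by
    intro i
    have heta : eta Pt i = 0 := by
      simp [eta, hPt]
    rw [alpha, if_neg (hNbar i), heta]
    norm_num
  have heff : effSets Pt = Rt := by
    funext i
    rw [effSets, if_neg (hNbar i), hPt]
  have hmech : ∀ i j, mech2 s Pt i j = gammaStar s Rt * w Rt i j := by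
    intro i j
    rw [mech2, halpha, heff, mech1, one_mul]
  have hutilt : ∀ i, util Rt (mech2 s Pt) i = gammaStar s Rt := by
    intro i
    refine bundleUtil_const (hRt i) (fun j hj => ?_)
    rw [hmech, w, if_pos hj, mul_one]
  have hgs0 : 0 ≤ gammaStar s Rt := gammaStar_nonneg s Rt
  constructor
  · -- Nash equilibrium
    intro i Pi'
    set P' := Function.update Pt i Pi' with hP'
    have hP'i : P' i = Pi' := Function.update_self i Pi' Pt
    have hP'k : ∀ k, k ≠ i → P' k = fun l => Rt l := fun k hk =>
      Function.update_of_ne hk Pi' Pt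
    have hP'll : ∀ l, P' l l = if l = i then Pi' i else Rt l := by
      intro l
      by_cases hl : l = i
      · subst hl; rw [hP'i, if_pos rfl]
      · rw [hP'k l hl, if_neg hl]
    rw [hutilt i]
    by_cases hNi : inNbar P' i
    · -- penalized: zero bundle
      have : util Rt (mech2 s P') i = 0 := by
        refine bundleUtil_const (hRt i) (fun j hj => ?_)
        rw [mech2, alpha, if_pos hNi, zero_mul]
      rw [this]; exact hgs0
    · have heffi : effSets P' i = Pi' i := by
        rw [effSets, if_neg hNi, hP'i]
      by_cases hsub : Rt i ⊆ Pi' i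
      · -- i overreports (or truthful) own set: no other agent penalized
        have hNk : ∀ k, ¬ inNbar P' k := by
          rintro k ⟨l, hl⟩
          by_cases hk : k = i
          · exact hNi (hk ▸ ⟨l, hl⟩)
          · rw [hP'k k hk] at hl
            rw [hP'll l] at hl
            by_cases hli : l = i
            · subst hli
              rw [if_pos rfl] at hl
              exact hl.not_subset hsub
            · rw [if_neg hli] at hl
              exact ssubset_irrefl _ hl
        have heffsub : ∀ k, Rt k ⊆ effSets P' k := by
          intro k
          by_cases hk : k = i
          · subst hk; rw [heffi]; exact hsub
          · rw [effSets, if_neg (hNk k), hP'k k hk]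
        have hwle : ∀ k j, w Rt k j ≤ w (effSets P') k j := w_mono heffsub
        -- gammaStar decreases
        obtain ⟨j0, hj0⟩ := hRt i
        have hbdd : BddAbove {γ : ℝ | 0 ≤ γ ∧ ∀ j, γ * ∑ k, w Rt k j ≤ s j} :=
          gset_bddAbove (one_lt_csum hj0)
        have hγle : gammaStar s (effSets P') ≤ gammaStar s Rt := by
          refine csSup_le_csSup hbdd ⟨0, zero_mem_gset hs _⟩ ?_
          rintro γ ⟨hγ0, hγ⟩
          refine ⟨hγ0, fun j => le_trans ?_ (hγ j)⟩
          exact mul_le_mul_of_nonneg_left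
            (Finset.sum_le_sum fun k _ => hwle k j) hγ0
        have hγ'0 : 0 ≤ gammaStar s (effSets P') := gammaStar_nonneg s _
        have hα1 : alpha P' i ≤ 1 := by
          rw [alpha, if_neg hNi]
          have : (0 : ℝ) ≤ (eta P' i : ℝ) / n := by positivity
          linarith
        have hu : util Rt (mech2 s P') i = alpha P' i * gammaStar s (effSets P') := by
          refine bundleUtil_const (hRt i) (fun j hj => ?_)
          rw [mech2, mech1, w, heffi, if_pos (hsub hj), mul_one]
        rw [hu]
        calc alpha P' i * gammaStar s (effSets P') ≤ gammaStar s (effSets P') :=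
              mul_le_of_le_one_left hγ'0 hα1
          _ ≤ gammaStar s Rt := hγle
      · -- i omits a truly desired good: utility 0
        obtain ⟨j0, hj0, hj0'⟩ := Finset.not_subset.mp hsub
        have hx : mech2 s P' i j0 = 0 := by
          rw [mech2, mech1, w, heffi, if_neg hj0', mul_zero, mul_zero]
        calc util Rt (mech2 s P') i ≤ mech2 s P' i j0 := bundleUtil_le _ hj0
          _ = 0 := hx
          _ ≤ gammaStar s Rt := hgs0
  · -- maxmin optimality
    constructor
    · constructor
      · intro i j
        rw [hmech]
        exact mul_nonneg hgs0 (w_nonneg Rt i j)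
      · intro j
        have : ∑ i, mech2 s Pt i j = gammaStar s Rt * ∑ i, w Rt i j := by
          rw [Finset.mul_sum]
          exact Finset.sum_congr rfl fun i _ => hmech i j
        rw [this]
        exact gammaStar_mul_le hs Rt j
    · intro y hy
      cases isEmpty_or_nonempty (Fin n) with
      | inl hE =>
        rw [minUtil, minUtil, Set.range_eq_empty, Set.range_eq_empty]
      | inr hNE =>
        have hmin : minUtil Rt (mech2 s Pt) = gammaStar s Rt := by
          rw [minUtil]
          have : (Set.range fun i => util Rt (mech2 s Pt) i) = {gammaStar s Rt} := by
            ext a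
            simp only [Set.mem_range, Set.mem_singleton_iff]
            constructor
            · rintro ⟨i, rfl⟩; exact hutilt i
            · rintro rfl; exact ⟨Classical.arbitrary _, hutilt _⟩
          rw [this, csInf_singleton]
        rw [hmin, minUtil]
        set γ1 := sInf (Set.range fun i => util Rt y i) with hγ1
        have hγ1le : ∀ i, γ1 ≤ util Rt y i := fun i =>
          csInf_le (Set.finite_range _).bddBelow ⟨i, rfl⟩
        have hγ10 : 0 ≤ γ1 := by
          refine Real.sInf_nonneg ?_
          rintro a ⟨i, rfl⟩
          refine le_csInf ?_ ?_
          · obtain ⟨j, hj⟩ := hRt i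
            exact ⟨y i j, j, hj, rfl⟩
          · rintro b ⟨j, _, rfl⟩
            exact hy.1 i j
        obtain ⟨j0, hj0⟩ := hRt (Classical.arbitrary _)
        refine le_gammaStar (one_lt_csum hj0) hγ10 (fun j => ?_)
        calc γ1 * ∑ i, w Rt i j = ∑ i, γ1 * w Rt i j := Finset.mul_sum _ _ _
          _ ≤ ∑ i, y i j := by
            refine Finset.sum_le_sum fun i _ => ?_
            by_cases hj : j ∈ Rt i
            · rw [w, if_pos hj, mul_one]
              exact le_trans (hγ1le i) (bundleUtil_le _ hj)
            · rw [w, if_neg hj, mul_zero]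
              exact hy.1 i j
          _ ≤ s j := hy.2 j

end BandwidthAlloc
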